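/- arXiv:1803.07696 — 5 statements merged into one kernel-verified Lean document; each statement's English description precedes it below -/
import Mathlib

section
/- Let 1 ≤ t ≤ t+l−1 ≤ T. If λ ∈ ℝ^{nl}, ω ∈ ℝ^r and μ ∈ ℝ^n satisfy −F_x(t,l)·λ + Φ_x(t,l)·ω = −V(t,l)·μ and F_u(t,l)·λ + Φ_u(t,l)·ω = 0, then H₁(t,l)·ω + H₂(t,l)·μ = 0, i.e. the stacked vector (ω, μ) ∈ ℝ^{r+n} lies in the kernel of the recovery matrix H(t,l). -/
open Matrix

noncomputable section

variable {n m r : ℕ}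

/-- Block upper bidiagonal matrix `F_x(t,l)` (0-based block indices): diagonal blocks are
`I_n`, and block `(i, i+1)` is `-(A (t+i))ᵀ`. -/
def Fx (A : ℕ → Matrix (Fin n) (Fin n) ℝ) (t l : ℕ) :
    Matrix (Fin l × Fin n) (Fin l × Fin n) ℝ :=
  fun ip jq =>
    if ip.1 = jq.1 then (if ip.2 = jq.2 then (1 : ℝ) else 0)
    else if (jq.1 : ℕ) = (ip.1 : ℕ) + 1 then -((A (t + (ip.1 : ℕ)))ᵀ ip.2 jq.2)
    else 0

/-- Block diagonal matrix `F_u(t,l)` with diagonal blocks `(B (t+i))ᵀ`. -/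
def Fu (B : ℕ → Matrix (Fin n) (Fin m) ℝ) (t l : ℕ) :
    Matrix (Fin l × Fin m) (Fin l × Fin n) ℝ :=
  fun ip jq => if ip.1 = jq.1 then (B (t + (ip.1 : ℕ)))ᵀ ip.2 jq.2 else 0

/-- Vertical stack `Φ_x(t,l)` of the blocks `(G (t+i))ᵀ`. -/
def Phix (G : ℕ → Matrix (Fin r) (Fin n) ℝ) (t l : ℕ) :
    Matrix (Fin l × Fin n) (Fin r) ℝ :=
  fun ip q => (G (t + (ip.1 : ℕ)))ᵀ ip.2 q

/-- Vertical stack `Φ_u(t,l)` of the blocks `(D (t+i))ᵀ`. -/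
def Phiu (D : ℕ → Matrix (Fin r) (Fin m) ℝ) (t l : ℕ) :
    Matrix (Fin l × Fin m) (Fin r) ℝ :=
  fun ip q => (D (t + (ip.1 : ℕ)))ᵀ ip.2 q

/-- `V(t,l)`: all `n×n` blocks zero except the last one, which is `(A (t+l-1))ᵀ`. -/
def Vm (A : ℕ → Matrix (Fin n) (Fin n) ℝ) (t l : ℕ) :
    Matrix (Fin l × Fin n) (Fin n) ℝ :=
  fun ip q => if (ip.1 : ℕ) = l - 1 then (A (t + l - 1))ᵀ ip.2 q else 0

/-- `H₁(t,l) = F_u(t,l) · F_x(t,l)⁻¹ · Φ_x(t,l) + Φ_u(t,l)`. -/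
def H1m (A : ℕ → Matrix (Fin n) (Fin n) ℝ) (B : ℕ → Matrix (Fin n) (Fin m) ℝ)
    (G : ℕ → Matrix (Fin r) (Fin n) ℝ) (D : ℕ → Matrix (Fin r) (Fin m) ℝ) (t l : ℕ) :
    Matrix (Fin l × Fin m) (Fin r) ℝ :=
  Fu B t l * (Fx A t l)⁻¹ * Phix G t l + Phiu D t l

/-- `H₂(t,l) = F_u(t,l) · F_x(t,l)⁻¹ · V(t,l)`. -/
def H2m (A : ℕ → Matrix (Fin n) (Fin n) ℝ) (B : ℕ → Matrix (Fin n) (Fin m) ℝ) (t l : ℕ) :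
    Matrix (Fin l × Fin m) (Fin n) ℝ :=
  Fu B t l * (Fx A t l)⁻¹ * Vm A t l

/-- The recovery matrix `H(t,l) = [H₁(t,l)  H₂(t,l)]`. -/
def Hm (A : ℕ → Matrix (Fin n) (Fin n) ℝ) (B : ℕ → Matrix (Fin n) (Fin m) ℝ)
    (G : ℕ → Matrix (Fin r) (Fin n) ℝ) (D : ℕ → Matrix (Fin r) (Fin m) ℝ) (t l : ℕ) :
    Matrix (Fin l × Fin m) (Fin r ⊕ Fin n) ℝ :=
  fromCols (H1m A B G D t l) (H2m A B t l)

/-- Stack the vectors `lam t, lam (t+1), …, lam (t+l-1)` into a vector in `ℝ^{nl}`. -/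
def stackVec (lam : ℕ → Fin n → ℝ) (t l : ℕ) : Fin l × Fin n → ℝ :=
  fun ip => lam (t + (ip.1 : ℕ)) ip.2

/-- Full-horizon KKT conditions for the weight vector `ω` with costates `lam 1, …, lam T`. -/
def KKT (A : ℕ → Matrix (Fin n) (Fin n) ℝ) (B : ℕ → Matrix (Fin n) (Fin m) ℝ)
    (G : ℕ → Matrix (Fin r) (Fin n) ℝ) (D : ℕ → Matrix (Fin r) (Fin m) ℝ) (T : ℕ)
    (ω : Fin r → ℝ) (lam : ℕ → Fin n → ℝ) : Prop :=
  -(Fx A 1 T *ᵥ stackVec lam 1 T) + Phix G 1 T *ᵥ ω = 0 ∧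
    Fu B 1 T *ᵥ stackVec lam 1 T + Phiu D 1 T *ᵥ ω = 0

/-- The natural identification of `ℝ^{(l+1)·ι}`-indices with `ℝ^{l·ι} × ℝ^{ι}`-indices. -/
def splitIdx (l : ℕ) (ι : Type*) : Fin (l + 1) × ι → (Fin l × ι) ⊕ ι :=
  fun ip => if h : (ip.1 : ℕ) < l then Sum.inl (⟨ip.1, h⟩, ip.2) else Sum.inr ip.2



lemma Fx_isUnit_det {n : ℕ} (A : ℕ → Matrix (Fin n) (Fin n) ℝ) (t l : ℕ) :
    IsUnit (Fx A t l).det := by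
  have h : ((Fx A t l).submatrix (ofLex : Fin l ×ₗ Fin n → Fin l × Fin n) ofLex).BlockTriangular
      (id : Fin l ×ₗ Fin n → Fin l ×ₗ Fin n) := by
    rintro ⟨i, p⟩ ⟨j, q⟩ hlt
    simp only [id] at hlt
    change Fx A t l (i, p) (j, q) = 0
    rcases (show j < i ∨ j = i ∧ q < p from Prod.Lex.lt_iff.1 hlt) with h1 | ⟨h1, h2⟩ <;>
      simp [Fx]
    · rw [if_neg (by exact fun h => absurd h.symm (ne_of_lt h1)),
        if_neg (by omega : ¬ (j : ℕ) = (i : ℕ) + 1)]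
    · subst h1
      rw [if_pos rfl, if_neg (ne_of_gt h2)]
  have hdet : ((Fx A t l).submatrix (ofLex : Fin l ×ₗ Fin n → Fin l × Fin n) ofLex).det = 1 := by
    rw [Matrix.det_of_upperTriangular h]
    refine Finset.prod_eq_one fun i _ => ?_
    change Fx A t l (ofLex i) (ofLex i) = 1
    simp [Fx]
  have : (Fx A t l).det = 1 := by
    rwa [← Matrix.det_submatrix_equiv_self (toLex : Fin l × Fin n ≃ Fin l ×ₗ Fin n).symm]
  simp [this]

/-- If `λ, ω, μ` satisfy the windowed KKT-type equations, then `H₁(t,l)·ω + H₂(t,l)·μ = 0`,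
i.e. the stacked vector `(ω, μ)` lies in the kernel of the recovery matrix `H(t,l)`. -/
theorem kernel_of_windowed_equations (n m r T : ℕ) (hn : 0 < n) (hm : 0 < m) (hr : 0 < r) (hT : 1 ≤ T)
    (A : ℕ → Matrix (Fin n) (Fin n) ℝ) (B : ℕ → Matrix (Fin n) (Fin m) ℝ)
    (G : ℕ → Matrix (Fin r) (Fin n) ℝ) (D : ℕ → Matrix (Fin r) (Fin m) ℝ)
    (hAT : A T = 1)
    (t l : ℕ) (ht : 1 ≤ t) (hl : 1 ≤ l) (htl : t + l - 1 ≤ T)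
    (lam : Fin l × Fin n → ℝ) (ω : Fin r → ℝ) (μ : Fin n → ℝ)
    (heq1 : -(Fx A t l *ᵥ lam) + Phix G t l *ᵥ ω = -(Vm A t l *ᵥ μ))
    (heq2 : Fu B t l *ᵥ lam + Phiu D t l *ᵥ ω = 0) :
    H1m A B G D t l *ᵥ ω + H2m A B t l *ᵥ μ = 0 ∧
      Hm A B G D t l *ᵥ Sum.elim ω μ = 0 := by
  have hdet := Fx_isUnit_det A t l
  have hinv : (Fx A t l)⁻¹ * Fx A t l = 1 := nonsing_inv_mul _ hdet
  have hFxlam : Fx A t l *ᵥ lam = Phix G t l *ᵥ ω + Vm A t l *ᵥ μ := by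
    funext i
    have h := congrFun heq1 i
    simp only [Pi.add_apply, Pi.neg_apply] at h ⊢
    linarith
  have hlam : (Fx A t l)⁻¹ *ᵥ (Phix G t l *ᵥ ω + Vm A t l *ᵥ μ) = lam := by
    rw [← hFxlam, mulVec_mulVec, hinv, one_mulVec]
  have key : H1m A B G D t l *ᵥ ω + H2m A B t l *ᵥ μ = 0 := by
    unfold H1m H2m
    rw [add_mulVec, ← mulVec_mulVec, ← mulVec_mulVec, ← mulVec_mulVec, ← mulVec_mulVec]
    have hc : Fu B t l *ᵥ ((Fx A t l)⁻¹ *ᵥ (Phix G t l *ᵥ ω)) +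
        Fu B t l *ᵥ ((Fx A t l)⁻¹ *ᵥ (Vm A t l *ᵥ μ)) = Fu B t l *ᵥ lam := by
      rw [← mulVec_add, ← mulVec_add, hlam]
    calc Fu B t l *ᵥ ((Fx A t l)⁻¹ *ᵥ (Phix G t l *ᵥ ω)) + Phiu D t l *ᵥ ω +
          Fu B t l *ᵥ ((Fx A t l)⁻¹ *ᵥ (Vm A t l *ᵥ μ))
        = (Fu B t l *ᵥ ((Fx A t l)⁻¹ *ᵥ (Phix G t l *ᵥ ω)) +
            Fu B t l *ᵥ ((Fx A t l)⁻¹ *ᵥ (Vm A t l *ᵥ μ))) + Phiu D t l *ᵥ ω := by abel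
      _ = Fu B t l *ᵥ lam + Phiu D t l *ᵥ ω := by rw [hc]
      _ = 0 := heq2
  refine ⟨key, ?_⟩
  rw [Hm, fromCols_mulVec_sumElim, key]


end
end

section
/- Suppose the full-horizon KKT conditions hold for ω ∈ ℝ^r with costates λ = (λ_1,…,λ_T) ∈ (ℝ^n)^T, and adopt the convention λ_{T+1} = 0. Then for every window 1 ≤ t ≤ t+l−1 ≤ T, the restricted costate stack λ_{t:t+l−1} = (λ_t,…,λ_{t+l−1}) ∈ ℝ^{nl} satisfies −F_x(t,l)·λ_{t:t+l−1} + Φ_x(t,l)·ω = −V(t,l)·λ_{t+l} and F_u(t,l)·λ_{t:t+l−1} + Φ_u(t,l)·ω = 0. -/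
open Matrix

noncomputable section

variable {n m r : ℕ}

lemma Fx_mulVec (A : ℕ → Matrix (Fin n) (Fin n) ℝ) (t l : ℕ) (v : Fin l × Fin n → ℝ)
    (i : Fin l) (p : Fin n) :
    (Fx A t l *ᵥ v) (i, p) = v (i, p) -
      (if h : (i : ℕ) + 1 < l then ∑ q, A (t + (i : ℕ)) q p * v (⟨(i : ℕ) + 1, h⟩, q) else 0) := by
  have key : ∀ j : Fin l, (∑ q, Fx A t l (i, p) (j, q) * v (j, q)) =
      (if i = j then v (j, p) else 0) +
        (if (j : ℕ) = (i : ℕ) + 1 then -∑ q, A (t + (i : ℕ)) q p * v (j, q) else 0) := by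
    intro j
    by_cases h1 : i = j
    · subst h1
      simp [Fx, Finset.sum_ite_eq, Nat.succ_ne_self]
    · by_cases h2 : (j : ℕ) = (i : ℕ) + 1
      · simp [Fx, h1, h2, neg_mul, Finset.sum_neg_distrib, Matrix.transpose_apply]
      · simp [Fx, h1, h2]
  rw [mulVec, dotProduct]
  rw [Fintype.sum_prod_type]
  simp only [key, Finset.sum_add_distrib, Finset.sum_ite_eq, Finset.mem_univ, if_true]
  congr 1
  by_cases h : (i : ℕ) + 1 < l
  · rw [dif_pos h]
    rw [Finset.sum_eq_single (⟨(i : ℕ) + 1, h⟩ : Fin l)]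
    · simp
    · intro b _ hb
      rw [if_neg]
      intro hc
      exact hb (Fin.ext hc)
    · simp
  · rw [dif_neg h, neg_zero]
    apply Finset.sum_eq_zero
    intro j _
    have hj : (j : ℕ) ≠ (i : ℕ) + 1 := by have := j.isLt; omega
    simp [hj]

lemma Fu_mulVec (B : ℕ → Matrix (Fin n) (Fin m) ℝ) (t l : ℕ) (v : Fin l × Fin n → ℝ)
    (i : Fin l) (p : Fin m) :
    (Fu B t l *ᵥ v) (i, p) = ∑ q, B (t + (i : ℕ)) q p * v (i, q) := by
  rw [mulVec, dotProduct, Fintype.sum_prod_type]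
  rw [Finset.sum_eq_single i]
  · simp [Fu]
  · intro j _ hj
    simp [Fu, Ne.symm hj]
  · simp

lemma Phix_mulVec (G : ℕ → Matrix (Fin r) (Fin n) ℝ) (t l : ℕ) (ω : Fin r → ℝ)
    (i : Fin l) (p : Fin n) :
    (Phix G t l *ᵥ ω) (i, p) = ∑ s, G (t + (i : ℕ)) s p * ω s := by
  simp [Phix, mulVec, dotProduct, Matrix.transpose_apply]

lemma Phiu_mulVec (D : ℕ → Matrix (Fin r) (Fin m) ℝ) (t l : ℕ) (ω : Fin r → ℝ)
    (i : Fin l) (p : Fin m) :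
    (Phiu D t l *ᵥ ω) (i, p) = ∑ s, D (t + (i : ℕ)) s p * ω s := by
  simp [Phiu, mulVec, dotProduct, Matrix.transpose_apply]

lemma Vm_mulVec (A : ℕ → Matrix (Fin n) (Fin n) ℝ) (t l : ℕ) (u : Fin n → ℝ)
    (i : Fin l) (p : Fin n) :
    (Vm A t l *ᵥ u) (i, p) =
      if (i : ℕ) = l - 1 then ∑ q, A (t + l - 1) q p * u q else 0 := by
  by_cases h : (i : ℕ) = l - 1 <;>
    simp [Vm, mulVec, dotProduct, Matrix.transpose_apply, h]

/-- If the full-horizon KKT conditions hold (with the convention `λ_{T+1} = 0`), then for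
every window `1 ≤ t ≤ t+l−1 ≤ T` the restricted costate stack satisfies the windowed
equations. -/
theorem windowed_equations_of_KKT (n m r T : ℕ) (hn : 0 < n) (hm : 0 < m) (hr : 0 < r) (hT : 1 ≤ T)
    (A : ℕ → Matrix (Fin n) (Fin n) ℝ) (B : ℕ → Matrix (Fin n) (Fin m) ℝ)
    (G : ℕ → Matrix (Fin r) (Fin n) ℝ) (D : ℕ → Matrix (Fin r) (Fin m) ℝ)
    (hAT : A T = 1)
    (ω : Fin r → ℝ) (lam : ℕ → Fin n → ℝ)
    (hKKT : KKT A B G D T ω lam) (hlamT : lam (T + 1) = 0)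
    (t l : ℕ) (ht : 1 ≤ t) (hl : 1 ≤ l) (htl : t + l - 1 ≤ T) :
    -(Fx A t l *ᵥ stackVec lam t l) + Phix G t l *ᵥ ω = -(Vm A t l *ᵥ lam (t + l)) ∧
      Fu B t l *ᵥ stackVec lam t l + Phiu D t l *ᵥ ω = 0 := by
  -- pointwise recurrence from the first KKT equation
  have R1 : ∀ k, 1 ≤ k → k ≤ T → ∀ p : Fin n,
      lam k p = (∑ q, A k q p * lam (k + 1) q) + ∑ s, G k s p * ω s := by
    intro k hk1 hkT p
    have hk' : k - 1 < T := by omega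
    have h := congrFun hKKT.1 (⟨k - 1, hk'⟩, p)
    rw [Pi.add_apply, Pi.neg_apply, Fx_mulVec, Phix_mulVec, Pi.zero_apply] at h
    have e1 : 1 + (k - 1) = k := by omega
    simp only [e1] at h
    have hsv : stackVec lam 1 T (⟨k - 1, hk'⟩, p) = lam k p := by
      simp [stackVec, e1]
    rw [hsv] at h
    by_cases hcase : k - 1 + 1 < T
    · rw [dif_pos hcase] at h
      have e2 : 1 + (k - 1 + 1) = k + 1 := by omega
      have : (∑ q, A k q p * stackVec lam 1 T (⟨k - 1 + 1, hcase⟩, q))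
          = ∑ q, A k q p * lam (k + 1) q := by
        apply Finset.sum_congr rfl
        intro q _
        simp [stackVec, e2]
      rw [this] at h
      linarith
    · rw [dif_neg hcase] at h
      have hkeq : k = T := by omega
      have : (∑ q, A k q p * lam (k + 1) q) = 0 := by
        subst hkeq
        simp [hlamT]
      rw [this]
      linarith
  -- pointwise identity from the second KKT equation
  have R2 : ∀ k, 1 ≤ k → k ≤ T → ∀ p : Fin m,
      (∑ q, B k q p * lam k q) + ∑ s, D k s p * ω s = 0 := by
    intro k hk1 hkT p
    have hk' : k - 1 < T := by omega
    have h := congrFun hKKT.2 (⟨k - 1, hk'⟩, p)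
    rw [Pi.add_apply, Fu_mulVec, Phiu_mulVec, Pi.zero_apply] at h
    have e1 : 1 + (k - 1) = k := by omega
    simp only [e1] at h
    have hsv : ∀ q, stackVec lam 1 T (⟨k - 1, hk'⟩, q) = lam k q := by
      intro q; simp [stackVec, e1]
    simp only [hsv] at h
    exact h
  constructor
  · funext ip
    obtain ⟨i, p⟩ := ip
    rw [Pi.add_apply, Pi.neg_apply, Pi.neg_apply, Fx_mulVec, Phix_mulVec, Vm_mulVec]
    have hk1 : 1 ≤ t + (i : ℕ) := by omega
    have hkT : t + (i : ℕ) ≤ T := by have := i.isLt; omega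
    have hrec := R1 (t + (i : ℕ)) hk1 hkT p
    have hsv : stackVec lam t l (i, p) = lam (t + (i : ℕ)) p := rfl
    rw [hsv, hrec]
    by_cases hcase : (i : ℕ) + 1 < l
    · have hne : (i : ℕ) ≠ l - 1 := by omega
      rw [dif_pos hcase, if_neg hne]
      have : (∑ q, A (t + (i : ℕ)) q p * stackVec lam t l (⟨(i : ℕ) + 1, hcase⟩, q))
          = ∑ q, A (t + (i : ℕ)) q p * lam (t + (i : ℕ) + 1) q := by
        apply Finset.sum_congr rfl
        intro q _
        have : t + ((i : ℕ) + 1) = t + (i : ℕ) + 1 := by omega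
        simp [stackVec, this]
      rw [this]
      ring
    · have heq : (i : ℕ) = l - 1 := by have := i.isLt; omega
      rw [dif_neg hcase, if_pos heq]
      have e3 : t + l - 1 = t + (i : ℕ) := by omega
      have e4 : t + l = t + (i : ℕ) + 1 := by omega
      rw [e3, e4]
      ring
  · funext ip
    obtain ⟨i, p⟩ := ip
    rw [Pi.add_apply, Fu_mulVec, Phiu_mulVec, Pi.zero_apply]
    have hk1 : 1 ≤ t + (i : ℕ) := by omega
    have hkT : t + (i : ℕ) ≤ T := by have := i.isLt; omega
    have := R2 (t + (i : ℕ)) hk1 hkT p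
    simpa [stackVec] using this

end
end

section
/- (Lemma 1, iterative property.) For all integers 1 ≤ t ≤ t+l−1 < T, the recovery matrix satisfies H(t,l+1) = M·N, where M ∈ ℝ^{m(l+1)×(r+n)} is the block matrix with top block row [H₁(t,l) H₂(t,l)] and bottom block row [D_{t+l}ᵀ B_{t+l}ᵀ], and N ∈ ℝ^{(r+n)×(r+n)} is the block matrix with block rows [I_r 0] and [G_{t+l}ᵀ A_{t+l}ᵀ]. -/
open Matrix

noncomputable section

variable {n m r : ℕ}

def splitEquiv (l : ℕ) (ι : Type*) : Fin (l + 1) × ι ≃ (Fin l × ι) ⊕ ι where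
  toFun := splitIdx l ι
  invFun := Sum.elim (fun ip => (ip.1.castSucc, ip.2)) (fun p => (Fin.last l, p))
  left_inv := by
    rintro ⟨i, p⟩
    by_cases h : (i : ℕ) < l
    · simp only [splitIdx, dif_pos h, Sum.elim_inl]
      exact Prod.ext (Fin.ext rfl) rfl
    · simp only [splitIdx, dif_neg h, Sum.elim_inr]
      have : (i : ℕ) = l := by omega
      exact Prod.ext (Fin.ext (by simp [Fin.last, this])) rfl
  right_inv := by
    rintro (⟨i, p⟩ | p)
    · simp only [Sum.elim_inl, splitIdx, Fin.coe_castSucc, i.isLt, ↓reduceDIte]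
    · simp [splitIdx]

lemma splitEquiv_symm_inl (l : ℕ) (ι : Type*) (i : Fin l) (p : ι) :
    (splitEquiv l ι).symm (Sum.inl (i, p)) = (i.castSucc, p) := rfl

lemma splitEquiv_symm_inr (l : ℕ) (ι : Type*) (p : ι) :
    (splitEquiv l ι).symm (Sum.inr p) = (Fin.last l, p) := rfl

lemma Fx_reindex (A : ℕ → Matrix (Fin n) (Fin n) ℝ) (t l : ℕ) :
    (Fx A t (l + 1)).submatrix (splitEquiv l (Fin n)).symm (splitEquiv l (Fin n)).symm =
      fromBlocks (Fx A t l) (-(Vm A t l)) 0 1 := by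
  ext s u
  rcases s with ⟨i, p⟩ | p <;> rcases u with ⟨j, q⟩ | q <;>
    simp only [submatrix_apply, splitEquiv_symm_inl, splitEquiv_symm_inr, Fx,
      fromBlocks_apply₁₁, fromBlocks_apply₁₂, fromBlocks_apply₂₁, fromBlocks_apply₂₂]
  · have h1 : (i.castSucc = j.castSucc) ↔ i = j := by
      constructor <;> intro h <;> exact Fin.ext (by simpa [Fin.ext_iff] using h)
    simp [Fx, h1]
    rfl
  · have h1 : ¬ (i.castSucc = Fin.last l) := (Fin.castSucc_lt_last i).ne
    simp only [h1, if_false]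
    simp only [Fin.val_last, Fin.coe_castSucc, Pi.neg_apply, Vm, Matrix.neg_apply]
    by_cases h2 : l = (i : ℕ) + 1
    · simp only [eq_true h2, eq_true (show (i : ℕ) = l - 1 by omega), if_true]
      have h3 : t + (i : ℕ) = t + l - 1 := by omega
      simp only [Fin.coe_castSucc, h3]
    · simp only [eq_false h2, eq_false (show ¬ ((i : ℕ) = l - 1) by omega), if_false, neg_zero]
  · have h1 : ¬ (Fin.last l = j.castSucc) := by
      simp only [Fin.ext_iff, Fin.coe_castSucc, Fin.val_last]; omega
    simp only [h1, if_false]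
    simp only [eq_false (show ¬ ((j.castSucc : ℕ) = (Fin.last l : ℕ) + 1) by simp only [Fin.coe_castSucc, Fin.val_last]; omega), if_false]
    simp
  · simp [one_apply]
    rfl

lemma Fu_reindex (B : ℕ → Matrix (Fin n) (Fin m) ℝ) (t l : ℕ) :
    (Fu B t (l + 1)).submatrix (splitEquiv l (Fin m)).symm (splitEquiv l (Fin n)).symm =
      fromBlocks (Fu B t l) 0 0 ((B (t + l))ᵀ) := by
  ext s u
  rcases s with ⟨i, p⟩ | p <;> rcases u with ⟨j, q⟩ | q <;>
    simp only [submatrix_apply, splitEquiv_symm_inl, splitEquiv_symm_inr, Fu,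
      fromBlocks_apply₁₁, fromBlocks_apply₁₂, fromBlocks_apply₂₁, fromBlocks_apply₂₂]
  · have h1 : (i.castSucc = j.castSucc) ↔ i = j := by
      constructor <;> intro h <;> exact Fin.ext (by simpa [Fin.ext_iff] using h)
    simp [Fu, h1]
  · simp only [(Fin.castSucc_lt_last i).ne, if_false]; simp
  · simp only [Ne.symm (Fin.castSucc_lt_last j).ne, if_false]; simp
  · simp

lemma Phix_reindex (G : ℕ → Matrix (Fin r) (Fin n) ℝ) (t l : ℕ) :
    (Phix G t (l + 1)).submatrix (splitEquiv l (Fin n)).symm id =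
      fromRows (Phix G t l) ((G (t + l))ᵀ) := by
  ext s q
  rcases s with ⟨i, p⟩ | p <;>
    simp [submatrix_apply, splitEquiv_symm_inl, splitEquiv_symm_inr, Phix]

lemma Phiu_reindex (D : ℕ → Matrix (Fin r) (Fin m) ℝ) (t l : ℕ) :
    (Phiu D t (l + 1)).submatrix (splitEquiv l (Fin m)).symm id =
      fromRows (Phiu D t l) ((D (t + l))ᵀ) := by
  ext s q
  rcases s with ⟨i, p⟩ | p <;>
    simp [submatrix_apply, splitEquiv_symm_inl, splitEquiv_symm_inr, Phiu]

lemma Vm_reindex (A : ℕ → Matrix (Fin n) (Fin n) ℝ) (t l : ℕ) :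
    (Vm A t (l + 1)).submatrix (splitEquiv l (Fin n)).symm id =
      fromRows 0 ((A (t + l))ᵀ) := by
  ext s q
  rcases s with ⟨i, p⟩ | p <;>
    simp only [submatrix_apply, splitEquiv_symm_inl, splitEquiv_symm_inr, Vm,
      fromRows_apply_inl, fromRows_apply_inr]
  · simp only [show ¬ ((i.castSucc : ℕ) = l + 1 - 1) by simp only [Fin.coe_castSucc]; omega, if_false]; simp
  · simp only [show ((Fin.last l : ℕ) = l + 1 - 1) by simp, if_true]
    have h3 : t + (l + 1) - 1 = t + l := by omega
    rw [h3]
    rfl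

lemma Fx_blockTriangular (A : ℕ → Matrix (Fin n) (Fin n) ℝ) (t l : ℕ) :
    BlockTriangular (Fx A t l) Prod.fst := by
  rintro ⟨i, p⟩ ⟨j, q⟩ h
  have hj : (j : ℕ) < (i : ℕ) := h
  simp only [Fx]
  rw [if_neg (by intro hh; rw [hh] at hj; omega), if_neg (by omega)]

lemma det_Fx (A : ℕ → Matrix (Fin n) (Fin n) ℝ) (t l : ℕ) : (Fx A t l).det = 1 := by
  rw [(Fx_blockTriangular A t l).det]
  refine Finset.prod_eq_one fun a _ => ?_
  have h : (Fx A t l).toSquareBlock Prod.fst a = 1 := by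
    ext ⟨⟨i, p⟩, hi⟩ ⟨⟨j, q⟩, hj⟩
    simp only [toSquareBlock_def] at hi hj ⊢
    have hij : i = j := by rw [show i = a from hi, show j = a from hj]
    subst hij
    simp only [Fx, if_pos rfl, one_apply, Subtype.mk.injEq, Prod.mk.injEq, true_and]
    by_cases hpq : p = q <;> simp [hpq]
  rw [h, det_one]

lemma Fx_mul_inv (A : ℕ → Matrix (Fin n) (Fin n) ℝ) (t l : ℕ) :
    Fx A t l * (Fx A t l)⁻¹ = 1 :=
  mul_nonsing_inv _ (by rw [det_Fx]; exact isUnit_one)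

lemma inv_fromBlocks_Fx (A : ℕ → Matrix (Fin n) (Fin n) ℝ) (t l : ℕ) :
    (fromBlocks (Fx A t l) (-(Vm A t l)) 0 (1 : Matrix (Fin n) (Fin n) ℝ))⁻¹ =
      fromBlocks (Fx A t l)⁻¹ ((Fx A t l)⁻¹ * Vm A t l) 0 1 := by
  apply inv_eq_right_inv
  rw [fromBlocks_multiply]
  have h1 : Fx A t l * ((Fx A t l)⁻¹ * Vm A t l) + -(Vm A t l) * (1 : Matrix (Fin n) (Fin n) ℝ)
      = 0 := by
    rw [← Matrix.mul_assoc, Fx_mul_inv, Matrix.one_mul, Matrix.mul_one]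
    simp
  rw [Fx_mul_inv, h1]
  simp [← fromBlocks_one]

lemma fromColumns_submatrix {m₁ n₁ n₂ o : Type*} (X : Matrix m₁ n₁ ℝ) (Y : Matrix m₁ n₂ ℝ)
    (f : o → m₁) :
    (fromCols X Y).submatrix f id = fromCols (X.submatrix f id) (Y.submatrix f id) := by
  ext i (j | j) <;> simp

lemma submatrix_add' {m₁ n₁ o₁ o₂ : Type*} (X Y : Matrix m₁ n₁ ℝ) (f : o₁ → m₁) (g : o₂ → n₁) :
    (X + Y).submatrix f g = X.submatrix f g + Y.submatrix f g := by
  ext i j; simp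

lemma fromRows_add' {m₁ m₂ n₁ : Type*} (X₁ X₂ : Matrix m₁ n₁ ℝ) (Y₁ Y₂ : Matrix m₂ n₁ ℝ) :
    fromRows X₁ Y₁ + fromRows X₂ Y₂ = fromRows (X₁ + X₂) (Y₁ + Y₂) := by
  ext (i | i) j <;> simp

/-- Lemma 1 (iterative property): `H(t,l+1) = M·N` with
`M = [H₁(t,l) H₂(t,l); D_{t+l}ᵀ B_{t+l}ᵀ]` and `N = [I 0; G_{t+l}ᵀ A_{t+l}ᵀ]`,
under the natural identification of row indices. -/
theorem recovery_matrix_iterative (n m r T : ℕ) (hn : 0 < n) (hm : 0 < m) (hr : 0 < r) (hT : 1 ≤ T)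
    (A : ℕ → Matrix (Fin n) (Fin n) ℝ) (B : ℕ → Matrix (Fin n) (Fin m) ℝ)
    (G : ℕ → Matrix (Fin r) (Fin n) ℝ) (D : ℕ → Matrix (Fin r) (Fin m) ℝ)
    (hAT : A T = 1)
    (t l : ℕ) (ht : 1 ≤ t) (hl : 1 ≤ l) (htl : t + l - 1 < T) :
    Hm A B G D t (l + 1) =
      (fromBlocks (H1m A B G D t l) (H2m A B t l) ((D (t + l))ᵀ) ((B (t + l))ᵀ) *
        fromBlocks (1 : Matrix (Fin r) (Fin r) ℝ) (0 : Matrix (Fin r) (Fin n) ℝ)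
          ((G (t + l))ᵀ) ((A (t + l))ᵀ)).submatrix (splitIdx l (Fin m)) id := by
  set em := splitEquiv l (Fin m) with hem
  set en := splitEquiv l (Fin n) with hen
  have hinv : ((Fx A t (l + 1))⁻¹).submatrix ⇑en.symm ⇑en.symm =
      fromBlocks (Fx A t l)⁻¹ ((Fx A t l)⁻¹ * Vm A t l) 0 1 := by
    rw [← inv_submatrix_equiv, Fx_reindex, inv_fromBlocks_Fx]
  have hFuinv : (Fu B t (l + 1) * (Fx A t (l + 1))⁻¹).submatrix ⇑em.symm ⇑en.symm =
      fromBlocks (Fu B t l * (Fx A t l)⁻¹) (Fu B t l * (Fx A t l)⁻¹ * Vm A t l)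
        0 ((B (t + l))ᵀ) := by
    rw [← submatrix_mul_equiv (Fu B t (l + 1)) ((Fx A t (l + 1))⁻¹) _ en.symm,
      hinv, Fu_reindex, fromBlocks_multiply]
    simp only [Matrix.zero_mul, Matrix.mul_zero, add_zero, zero_add, Matrix.mul_one,
      Matrix.one_mul]
    rw [Matrix.mul_assoc]
  have key : (Hm A B G D t (l + 1)).submatrix ⇑em.symm id =
      fromBlocks (H1m A B G D t l) (H2m A B t l) ((D (t + l))ᵀ) ((B (t + l))ᵀ) *
        fromBlocks (1 : Matrix (Fin r) (Fin r) ℝ) (0 : Matrix (Fin r) (Fin n) ℝ)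
          ((G (t + l))ᵀ) ((A (t + l))ᵀ) := by
    rw [fromBlocks_multiply, ← fromCols_fromRows_eq_fromBlocks, Hm, fromColumns_submatrix]
    refine (fromCols_ext_iff _ _ _ _).mpr ⟨?_, ?_⟩
    · rw [H1m, submatrix_add',
        ← submatrix_mul_equiv (Fu B t (l + 1) * (Fx A t (l + 1))⁻¹) (Phix G t (l + 1)) _ en.symm,
        hFuinv, Phix_reindex, Phiu_reindex, fromBlocks_mul_fromRows, fromRows_add']
      refine (fromRows_ext_iff _ _ _ _).mpr ⟨?_, ?_⟩
      · rw [H1m, H2m, Matrix.mul_one]; abel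
      · simp only [Matrix.zero_mul, zero_add, Matrix.mul_one]; abel
    · rw [H2m,
        ← submatrix_mul_equiv (Fu B t (l + 1) * (Fx A t (l + 1))⁻¹) (Vm A t (l + 1)) _ en.symm,
        hFuinv, Vm_reindex, fromBlocks_mul_fromRows]
      refine (fromRows_ext_iff _ _ _ _).mpr ⟨?_, ?_⟩
      · rw [H1m, H2m]
        simp only [Matrix.mul_zero, zero_add, Matrix.zero_mul]
      · simp only [Matrix.mul_zero, Matrix.zero_mul, zero_add]
  have hcoe : ⇑em = splitIdx l (Fin m) := rfl
  rw [← key, ← hcoe, submatrix_submatrix, Equiv.symm_comp_self, Function.id_comp,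
    submatrix_id_id]

end
end

section
/- (Lemma 2, rank nondecreasing.) Let 1 ≤ t ≤ t+l−1 < T. If the matrix A_{t+l} ∈ ℝ^{n×n} is invertible (det A_{t+l} ≠ 0), then rank H(t,l) ≤ rank H(t,l+1). -/
open Matrix

noncomputable section

variable {n m r : ℕ}

namespace RecoveryAux

/-- The index equivalence `Fin (l+1) × ι ≃ (Fin l × ι) ⊕ ι`. -/
def esp (l : ℕ) (ι : Type*) : Fin (l + 1) × ι ≃ (Fin l × ι) ⊕ ι where
  toFun ip := if h : (ip.1 : ℕ) < l then Sum.inl (⟨ip.1, h⟩, ip.2) else Sum.inr ip.2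
  invFun := Sum.elim (fun ip => (ip.1.castSucc, ip.2)) (fun p => (Fin.last l, p))
  left_inv := by
    rintro ⟨i, p⟩
    by_cases h : (i : ℕ) < l
    · simp only [h, dif_pos]
      simp only [Sum.elim_inl]
      refine Prod.ext ?_ rfl
      exact Fin.ext (by simp)
    · simp only [h, dif_neg, not_false_iff]
      simp only [Sum.elim_inr]
      refine Prod.ext ?_ rfl
      exact Fin.ext (by simp; omega)
  right_inv := by
    rintro (⟨i, p⟩ | p)
    · simp only [Sum.elim_inl]
      have h : ((i.castSucc : Fin (l+1)) : ℕ) < l := by simp [i.isLt]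
      simp [h, Prod.ext_iff, Fin.ext_iff]
    · simp only [Sum.elim_inr]
      have h : ¬ ((Fin.last l : Fin (l+1)) : ℕ) < l := by simp
      simp [h]

@[simp] lemma esp_symm_inl (l : ℕ) (ι : Type*) (i : Fin l) (p : ι) :
    (esp l ι).symm (Sum.inl (i, p)) = (i.castSucc, p) := rfl

@[simp] lemma esp_symm_inr (l : ℕ) (ι : Type*) (p : ι) :
    (esp l ι).symm (Sum.inr p) = (Fin.last l, p) := rfl

variable {n m r : ℕ}

/-- `Fx` is block-triangular for the grading by the block index. -/
lemma Fx_blockTriangular (A : ℕ → Matrix (Fin n) (Fin n) ℝ) (t l : ℕ) :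
    (Fx A t l).BlockTriangular Prod.fst := by
  rintro ⟨i, p⟩ ⟨j, q⟩ h
  simp only at h
  have h1 : i ≠ j := by intro e; exact absurd e.symm (ne_of_lt h)
  have h2 : ¬ ((j : ℕ) = (i : ℕ) + 1) := by
    have : (j : ℕ) < (i : ℕ) := h
    omega
  simp [Fx, h1, h2]

lemma isUnit_det_Fx (A : ℕ → Matrix (Fin n) (Fin n) ℝ) (t l : ℕ) :
    IsUnit (Fx A t l).det := by
  rw [(Fx_blockTriangular A t l).det]
  have hone : ∀ a ∈ Finset.univ.image (Prod.fst : Fin l × Fin n → Fin l),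
      ((Fx A t l).toSquareBlock Prod.fst a).det = 1 := by
    intro a _
    have : (Fx A t l).toSquareBlock Prod.fst a = 1 := by
      ext x y
      obtain ⟨⟨xi, xp⟩, hx⟩ := x
      obtain ⟨⟨yi, yp⟩, hy⟩ := y
      simp only at hx hy
      subst hx
      have hxy : xi = yi := hy.symm
      subst hxy
      simp only [Matrix.toSquareBlock_def, Fx, Matrix.one_apply]
      by_cases h : xp = yp <;>
        simp [h, Subtype.mk.injEq, Prod.mk.injEq]
    rw [this, Matrix.det_one]
  rw [Finset.prod_congr rfl hone, Finset.prod_const_one]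
  exact isUnit_one

lemma Fx_succ (A : ℕ → Matrix (Fin n) (Fin n) ℝ) (t l : ℕ) (hl : 1 ≤ l) :
    (Fx A t (l + 1)).submatrix (esp l (Fin n)).symm (esp l (Fin n)).symm
      = Matrix.fromBlocks (Fx A t l) (-(Vm A t l)) 0 1 := by
  ext x y
  rcases x with ⟨i, p⟩ | p <;> rcases y with ⟨j, q⟩ | q
  · -- inl inl
    simp only [Matrix.submatrix_apply, esp_symm_inl, Matrix.fromBlocks_apply₁₁, Fx,
      Fin.castSucc_inj, Fin.coe_castSucc]
    congr 1
  · -- inl inr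
    have h1 : i.castSucc ≠ Fin.last l := (Fin.castSucc_lt_last i).ne
    dsimp only [Matrix.submatrix_apply, esp_symm_inl, esp_symm_inr, Matrix.fromBlocks_apply₁₂, Fx]
    simp only [Matrix.submatrix_apply, esp_symm_inl, esp_symm_inr, Matrix.fromBlocks_apply₁₂,
      Fx, Vm, Matrix.neg_apply, if_neg h1, Fin.val_last, Fin.coe_castSucc]
    by_cases h : l = (i : ℕ) + 1
    · have hi : (i : ℕ) = l - 1 := by omega
      have ht' : t + (i : ℕ) = t + l - 1 := by omega
      rw [if_pos h, if_pos hi, ht']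
    · have hi : ¬ ((i : ℕ) = l - 1) := by have := i.isLt; omega
      rw [if_neg h, if_neg hi, neg_zero]
  · -- inr inl
    have h1 : Fin.last l ≠ j.castSucc := (Fin.castSucc_lt_last j).ne'
    have h2 : ¬ ((j.castSucc : Fin (l+1)) : ℕ) = ((Fin.last l : Fin (l+1)) : ℕ) + 1 := by
      have := j.isLt; simp; omega
    dsimp only [Matrix.submatrix_apply, esp_symm_inl, esp_symm_inr, Matrix.fromBlocks_apply₂₁, Fx]
    simp only [Matrix.submatrix_apply, esp_symm_inl, esp_symm_inr, Matrix.fromBlocks_apply₂₁,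
      Fx, if_neg h1, Matrix.zero_apply]
    rw [if_neg h2]
  · -- inr inr
    simp [Fx, Matrix.one_apply]
    congr 1

lemma Fu_succ (B : ℕ → Matrix (Fin n) (Fin m) ℝ) (t l : ℕ) :
    (Fu B t (l + 1)).submatrix (esp l (Fin m)).symm (esp l (Fin n)).symm
      = Matrix.fromBlocks (Fu B t l) 0 0 (B (t + l))ᵀ := by
  ext x y
  rcases x with ⟨i, p⟩ | p <;> rcases y with ⟨j, q⟩ | q
  · simp only [Matrix.submatrix_apply, esp_symm_inl, Matrix.fromBlocks_apply₁₁, Fu,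
      Fin.castSucc_inj, Fin.coe_castSucc]
  · have h1 : i.castSucc ≠ Fin.last l := (Fin.castSucc_lt_last i).ne
    simp [Fu, h1]
  · have h1 : Fin.last l ≠ j.castSucc := (Fin.castSucc_lt_last j).ne'
    simp [Fu, h1]
  · simp [Fu]

lemma Phix_succ (G : ℕ → Matrix (Fin r) (Fin n) ℝ) (t l : ℕ) :
    (Phix G t (l + 1)).submatrix (esp l (Fin n)).symm id
      = Matrix.fromRows (Phix G t l) (G (t + l))ᵀ := by
  ext x y
  rcases x with ⟨i, p⟩ | p <;> simp [Phix]

lemma Phiu_succ (D : ℕ → Matrix (Fin r) (Fin m) ℝ) (t l : ℕ) :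
    (Phiu D t (l + 1)).submatrix (esp l (Fin m)).symm id
      = Matrix.fromRows (Phiu D t l) (D (t + l))ᵀ := by
  ext x y
  rcases x with ⟨i, p⟩ | p <;> simp [Phiu]

lemma Vm_succ (A : ℕ → Matrix (Fin n) (Fin n) ℝ) (t l : ℕ) :
    (Vm A t (l + 1)).submatrix (esp l (Fin n)).symm id
      = Matrix.fromRows 0 (A (t + l))ᵀ := by
  ext x y
  rcases x with ⟨i, p⟩ | p
  · have h : ¬ ((i.castSucc : Fin (l+1)) : ℕ) = l + 1 - 1 := by
      have := i.isLt; simp only [Fin.coe_castSucc]; omega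
    simp only [Matrix.submatrix_apply, esp_symm_inl, Vm, if_neg h]
    simp
    intro h'; exfalso; have := i.isLt; omega
  · have h : ((Fin.last l : Fin (l+1)) : ℕ) = l + 1 - 1 := by simp
    have h2 : t + (l + 1) - 1 = t + l := by omega
    simp [Vm, h, h2]

lemma Fx_inv_succ (A : ℕ → Matrix (Fin n) (Fin n) ℝ) (t l : ℕ) (hl : 1 ≤ l) :
    ((Fx A t (l + 1))⁻¹).submatrix (esp l (Fin n)).symm (esp l (Fin n)).symm
      = Matrix.fromBlocks (Fx A t l)⁻¹ ((Fx A t l)⁻¹ * Vm A t l) 0 1 := by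
  rw [← Matrix.inv_submatrix_equiv, Fx_succ A t l hl]
  apply Matrix.inv_eq_right_inv
  rw [Matrix.fromBlocks_multiply]
  have h1 : Fx A t l * (Fx A t l)⁻¹ = 1 := Matrix.mul_nonsing_inv _ (isUnit_det_Fx A t l)
  have h2 : Fx A t l * ((Fx A t l)⁻¹ * Vm A t l) = Vm A t l := by
    rw [← Matrix.mul_assoc, h1, Matrix.one_mul]
  rw [h1, h2]
  simp [Matrix.fromBlocks_one]

lemma fromRows_congr {m₁ m₂ n' : Type*} {A C : Matrix m₁ n' ℝ} {B D : Matrix m₂ n' ℝ}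
    (h1 : A = C) (h2 : B = D) : Matrix.fromRows A B = Matrix.fromRows C D := by rw [h1, h2]

lemma fromRows_add {m₁ m₂ n' : Type*} (A C : Matrix m₁ n' ℝ) (B D : Matrix m₂ n' ℝ) :
    Matrix.fromRows A B + Matrix.fromRows C D = Matrix.fromRows (A + C) (B + D) := by
  ext (x | x) y <;> simp

/-- Rectangular version of `rank_submatrix_le` with row selection only. -/
lemma rank_submatrix_le' {k m' n' : Type*} [Fintype m'] [Fintype n']
    (f : k → m') (A : Matrix m' n' ℝ) :
    (A.submatrix f id).rank ≤ A.rank := by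
  have : (id : n' → n') = ⇑(Equiv.refl n') := rfl
  rw [this, Matrix.rank, Matrix.rank, Matrix.mulVecLin_submatrix]
  have h : LinearMap.funLeft ℝ ℝ ⇑(Equiv.refl n').symm = LinearMap.id := by
    ext v i; rfl
  rw [h, LinearMap.comp_id, LinearMap.range_comp]
  exact Submodule.finrank_map_le _ _

end RecoveryAux

open RecoveryAux in
/-- Lemma 2 (rank nondecreasing): if `det A_{t+l} ≠ 0` then
`rank H(t,l) ≤ rank H(t,l+1)`. -/
theorem recovery_matrix_rank_nondecreasing (n m r T : ℕ) (hn : 0 < n) (hm : 0 < m) (hr : 0 < r) (hT : 1 ≤ T)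
    (A : ℕ → Matrix (Fin n) (Fin n) ℝ) (B : ℕ → Matrix (Fin n) (Fin m) ℝ)
    (G : ℕ → Matrix (Fin r) (Fin n) ℝ) (D : ℕ → Matrix (Fin r) (Fin m) ℝ)
    (hAT : A T = 1)
    (t l : ℕ) (ht : 1 ≤ t) (hl : 1 ≤ l) (htl : t + l - 1 < T)
    (hdet : (A (t + l)).det ≠ 0) :
    (Hm A B G D t l).rank ≤ (Hm A B G D t (l + 1)).rank := by
  classical
  set M : Matrix (Fin r ⊕ Fin n) (Fin r ⊕ Fin n) ℝ :=
    Matrix.fromBlocks 1 0 (G (t + l))ᵀ (A (t + l))ᵀ with hMdef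
  have hM : IsUnit M.det := by
    rw [hMdef, Matrix.det_fromBlocks_zero₁₂, Matrix.det_one, one_mul, Matrix.det_transpose]
    exact isUnit_iff_ne_zero.mpr hdet
  -- Abbreviations
  set X : Matrix (Fin l × Fin n) (Fin l × Fin n) ℝ := (Fx A t l)⁻¹ with hX
  have hFuX : (Fu B t (l + 1)).submatrix (esp l (Fin m)).symm (esp l (Fin n)).symm *
      ((Fx A t (l + 1))⁻¹).submatrix (esp l (Fin n)).symm (esp l (Fin n)).symm
      = Matrix.fromBlocks (Fu B t l * X) (Fu B t l * (X * Vm A t l)) 0 (B (t + l))ᵀ := by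
    rw [Fu_succ, Fx_inv_succ A t l hl, Matrix.fromBlocks_multiply]
    simp [Matrix.mul_assoc]
    exact ⟨rfl, rfl⟩
  -- key identity : the top rows of the reindexed H(t,l+1) equal H(t,l) * M
  have key : (Hm A B G D t (l + 1)).submatrix
        (fun x : Fin l × Fin m => (esp l (Fin m)).symm (Sum.inl x)) id
      = Hm A B G D t l * M := by
    have hH1 : (H1m A B G D t (l + 1)).submatrix (esp l (Fin m)).symm id
        = Matrix.fromRows (H1m A B G D t l + H2m A B t l * (G (t + l))ᵀ)
            ((B (t + l))ᵀ * (G (t + l))ᵀ + (D (t + l))ᵀ) := by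
      unfold H1m
      have : (Fu B t (l+1) * (Fx A t (l+1))⁻¹ * Phix G t (l+1) + Phiu D t (l+1)).submatrix
            (esp l (Fin m)).symm id
          = (Fu B t (l+1) * (Fx A t (l+1))⁻¹ * Phix G t (l+1)).submatrix (esp l (Fin m)).symm id
            + (Phiu D t (l+1)).submatrix (esp l (Fin m)).symm id := by
        ext x y; simp
      rw [this, Phiu_succ]
      have hmul : (Fu B t (l+1) * (Fx A t (l+1))⁻¹ * Phix G t (l+1)).submatrix
            (esp l (Fin m)).symm id
          = ((Fu B t (l+1)).submatrix (esp l (Fin m)).symm (esp l (Fin n)).symm *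
              ((Fx A t (l+1))⁻¹).submatrix (esp l (Fin n)).symm (esp l (Fin n)).symm) *
              (Phix G t (l+1)).submatrix (esp l (Fin n)).symm id := by
        rw [Matrix.submatrix_mul_equiv, Matrix.submatrix_mul_equiv]
      rw [hmul, hFuX, Phix_succ, Matrix.fromBlocks_mul_fromRows, fromRows_add]
      refine fromRows_congr ?_ ?_
      · simp only [H2m]
        rw [← Matrix.mul_assoc (Fu B t l) ((Fx A t l)⁻¹) (Vm A t l)]
        abel
      · rw [Matrix.zero_mul, zero_add]
    have hH2 : (H2m A B t (l + 1)).submatrix (esp l (Fin m)).symm id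
        = Matrix.fromRows (H2m A B t l * (A (t + l))ᵀ)
            ((B (t + l))ᵀ * (A (t + l))ᵀ) := by
      unfold H2m
      have hmul : (Fu B t (l+1) * (Fx A t (l+1))⁻¹ * Vm A t (l+1)).submatrix
            (esp l (Fin m)).symm id
          = ((Fu B t (l+1)).submatrix (esp l (Fin m)).symm (esp l (Fin n)).symm *
              ((Fx A t (l+1))⁻¹).submatrix (esp l (Fin n)).symm (esp l (Fin n)).symm) *
              (Vm A t (l+1)).submatrix (esp l (Fin n)).symm id := by
        rw [Matrix.submatrix_mul_equiv, Matrix.submatrix_mul_equiv]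
      rw [hmul, hFuX, Vm_succ, Matrix.fromBlocks_mul_fromRows]
      refine fromRows_congr ?_ ?_
      · rw [Matrix.mul_zero, zero_add, ← Matrix.mul_assoc (Fu B t l) ((Fx A t l)⁻¹) (Vm A t l)]
      · rw [Matrix.zero_mul, zero_add]
    -- assemble
    have hsub : (Hm A B G D t (l + 1)).submatrix
          (fun x : Fin l × Fin m => (esp l (Fin m)).symm (Sum.inl x)) id
        = ((Hm A B G D t (l + 1)).submatrix (esp l (Fin m)).symm id).submatrix Sum.inl id := by
      rw [Matrix.submatrix_submatrix]; rfl
    rw [hsub]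
    have hHm : (Hm A B G D t (l + 1)).submatrix (esp l (Fin m)).symm id
        = Matrix.fromCols
            ((H1m A B G D t (l + 1)).submatrix (esp l (Fin m)).symm id)
            ((H2m A B t (l + 1)).submatrix (esp l (Fin m)).symm id) := by
      ext x y
      rcases y with y | y <;> simp [Hm, Matrix.fromCols]
    rw [hHm, hH1, hH2]
    rw [Hm, hMdef, Matrix.fromCols_mul_fromBlocks]
    ext x y
    rcases y with y | y <;>
      simp [Matrix.fromCols, Matrix.fromRows]
    all_goals rfl
  calc (Hm A B G D t l).rank = (Hm A B G D t l * M).rank :=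
        (Matrix.rank_mul_eq_left_of_isUnit_det M _ hM).symm
    _ = ((Hm A B G D t (l + 1)).submatrix
          (fun x : Fin l × Fin m => (esp l (Fin m)).symm (Sum.inl x)) id).rank := by rw [key]
    _ ≤ (Hm A B G D t (l + 1)).rank := rank_submatrix_le' _ _

end
end

section
/- (Rank stabilization.) Suppose the full-horizon KKT conditions hold for some ω ∈ ℝ^r with ω ≠ 0 and some costates λ ∈ (ℝ^n)^T. Let 1 ≤ t ≤ t+l−1 < T and suppose A_{t+l} ∈ ℝ^{n×n} is invertible. If rank H(t,l) = r+n−1, then rank H(t,l+1) = r+n−1. -/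
open Matrix

noncomputable section

variable {n m r : ℕ}

/- ===================== Auxiliary development ===================== -/

section AuxDev

/-- Equivalence version of `splitIdx`. -/
def sEquiv (l : ℕ) (ι : Type*) : Fin (l + 1) × ι ≃ (Fin l × ι) ⊕ ι where
  toFun := splitIdx l ι
  invFun := Sum.elim (fun ip => (ip.1.castSucc, ip.2)) fun q => (Fin.last l, q)
  left_inv := by
    rintro ⟨i, p⟩
    unfold splitIdx
    by_cases h : (i : ℕ) < l
    · simp only [dif_pos h, Sum.elim_inl]
      exact Prod.ext (Fin.ext rfl) rfl
    · simp only [dif_neg h, Sum.elim_inr]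
      refine Prod.ext (Fin.ext ?_) rfl
      have := i.isLt
      simp only [Fin.val_last]
      omega
  right_inv := by
    rintro (⟨i, p⟩ | q)
    · show splitIdx l ι (i.castSucc, p) = Sum.inl (i, p)
      unfold splitIdx
      rw [dif_pos (show ((i.castSucc : Fin (l + 1)) : ℕ) < l from i.isLt)]
      simp
    · show splitIdx l ι (Fin.last l, q) = Sum.inr q
      unfold splitIdx
      rw [dif_neg (by simp)]

lemma sEquiv_castSucc (l : ℕ) {ι : Type*} (i : Fin l) (p : ι) :
    sEquiv l ι (i.castSucc, p) = Sum.inl (i, p) :=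
  (sEquiv l ι).apply_symm_apply (Sum.inl (i, p))

lemma sEquiv_last (l : ℕ) {ι : Type*} (p : ι) :
    sEquiv l ι (Fin.last l, p) = Sum.inr p :=
  (sEquiv l ι).apply_symm_apply (Sum.inr p)

variable {A : ℕ → Matrix (Fin n) (Fin n) ℝ} {B : ℕ → Matrix (Fin n) (Fin m) ℝ}
  {G : ℕ → Matrix (Fin r) (Fin n) ℝ} {D : ℕ → Matrix (Fin r) (Fin m) ℝ} {t l : ℕ}

/- ------- componentwise mulVec formulas ------- -/

lemma Fx_mulVec_apply (x : Fin l × Fin n → ℝ) (i : Fin l) (p : Fin n) :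
    (Fx A t l *ᵥ x) (i, p) =
      x (i, p) - (if h : (i : ℕ) + 1 < l then
        ∑ q, A (t + (i : ℕ)) q p * x (⟨(i : ℕ) + 1, h⟩, q) else 0) := by
  have hsplit : ∀ jq : Fin l × Fin n, Fx A t l (i, p) jq * x jq =
      (if i = jq.1 then (if p = jq.2 then x jq else 0) else 0)
        + (if ((jq.1 : ℕ) = (i : ℕ) + 1) then -(A (t + (i : ℕ)) jq.2 p * x jq) else 0) := by
    rintro ⟨j, q⟩
    simp only [Fx, transpose_apply]
    by_cases hij : i = j
    · subst hij
      have hc : ¬ ((i : ℕ) = (i : ℕ) + 1) := by omega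
      simp [hc, ite_mul]
    · have hc : ¬ (i = j) := hij
      simp only [if_neg hc, ite_mul, zero_mul, neg_mul, zero_add]
  calc (Fx A t l *ᵥ x) (i, p)
      = ∑ jq : Fin l × Fin n, Fx A t l (i, p) jq * x jq := by
        simp [Matrix.mulVec, dotProduct]
    _ = (∑ jq : Fin l × Fin n, if i = jq.1 then (if p = jq.2 then x jq else 0) else 0)
        + ∑ jq : Fin l × Fin n,
            (if ((jq.1 : ℕ) = (i : ℕ) + 1) then -(A (t + (i : ℕ)) jq.2 p * x jq) else 0) := by
        rw [← Finset.sum_add_distrib]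
        exact Finset.sum_congr rfl fun jq _ => hsplit jq
    _ = x (i, p) - (if h : (i : ℕ) + 1 < l then
          ∑ q, A (t + (i : ℕ)) q p * x (⟨(i : ℕ) + 1, h⟩, q) else 0) := by
        congr 1
        · rw [Fintype.sum_prod_type]
          have hj : ∀ j : Fin l, (∑ q, if i = j then (if p = q then x (j, q) else 0) else 0)
              = if i = j then x (j, p) else 0 := by
            intro j
            rw [Finset.sum_ite_irrel]
            simp [Finset.sum_ite_eq]
          rw [Finset.sum_congr rfl fun j _ => hj j, Finset.sum_ite_eq]
          simp
        · rw [Fintype.sum_prod_type]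
          by_cases h : (i : ℕ) + 1 < l
          · rw [dif_pos h]
            have hiff : ∀ j : Fin l, ((j : ℕ) = (i : ℕ) + 1) ↔ j = (⟨(i : ℕ) + 1, h⟩ : Fin l) := by
              intro j; rw [Fin.ext_iff]
            have : ∀ j : Fin l,
                (∑ q, if ((j : ℕ) = (i : ℕ) + 1) then -(A (t + (i : ℕ)) q p * x (j, q)) else 0)
                  = if j = (⟨(i : ℕ) + 1, h⟩ : Fin l) then
                      ∑ q, -(A (t + (i : ℕ)) q p * x (j, q)) else 0 := by
              intro j
              rw [Finset.sum_ite_irrel]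
              simp [hiff j]
            rw [Finset.sum_congr rfl fun j _ => this j]
            rw [Finset.sum_ite_eq' Finset.univ (⟨(i : ℕ) + 1, h⟩ : Fin l)
              (fun j => ∑ q, -(A (t + (i : ℕ)) q p * x (j, q)))]
            simp [← Finset.sum_neg_distrib, sub_eq_add_neg]
          · rw [dif_neg h]
            have : ∀ j : Fin l, ¬ ((j : ℕ) = (i : ℕ) + 1) := by
              intro j; have := j.isLt; omega
            simp [this]
  
lemma Fu_mulVec_apply (x : Fin l × Fin n → ℝ) (i : Fin l) (p : Fin m) :
    (Fu B t l *ᵥ x) (i, p) = ∑ q, B (t + (i : ℕ)) q p * x (i, q) := by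
  have : (Fu B t l *ᵥ x) (i, p) = ∑ jq : Fin l × Fin n, Fu B t l (i, p) jq * x jq := by
    simp [Matrix.mulVec, dotProduct]
  rw [this, Fintype.sum_prod_type]
  have : ∀ j : Fin l, (∑ q, Fu B t l (i, p) (j, q) * x (j, q))
      = if i = j then ∑ q, B (t + (i : ℕ)) q p * x (j, q) else 0 := by
    intro j
    simp only [Fu, transpose_apply, ite_mul, zero_mul]
    rw [Finset.sum_ite_irrel]
    simp
  rw [Finset.sum_congr rfl fun j _ => this j, Finset.sum_ite_eq]
  simp

lemma Phix_mulVec_apply (v : Fin r → ℝ) (i : Fin l) (p : Fin n) :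
    (Phix G t l *ᵥ v) (i, p) = ∑ q, G (t + (i : ℕ)) q p * v q := by
  simp [Phix, Matrix.mulVec, dotProduct]

lemma Phiu_mulVec_apply (v : Fin r → ℝ) (i : Fin l) (p : Fin m) :
    (Phiu D t l *ᵥ v) (i, p) = ∑ q, D (t + (i : ℕ)) q p * v q := by
  simp [Phiu, Matrix.mulVec, dotProduct]

lemma Vm_mulVec_apply (v : Fin n → ℝ) (i : Fin l) (p : Fin n) :
    (Vm A t l *ᵥ v) (i, p) =
      if (i : ℕ) = l - 1 then ∑ q, A (t + l - 1) q p * v q else 0 := by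
  simp only [Vm, Matrix.mulVec, dotProduct, transpose_apply, ite_mul, zero_mul]
  rw [Finset.sum_ite_irrel]
  simp

end AuxDev
section AuxDev2

variable {A : ℕ → Matrix (Fin n) (Fin n) ℝ} {B : ℕ → Matrix (Fin n) (Fin m) ℝ}
  {G : ℕ → Matrix (Fin r) (Fin n) ℝ} {D : ℕ → Matrix (Fin r) (Fin m) ℝ} {t l : ℕ}

lemma FxSucc : Fx A t (l + 1) =
    (fromBlocks (Fx A t l) (-(Vm A t l)) 0 1).submatrix (sEquiv l (Fin n)) (sEquiv l (Fin n)) := by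
  ext ⟨i, p⟩ ⟨j, q⟩
  refine Fin.lastCases ?_ ?_ i <;> [skip; intro i] <;>
    (refine Fin.lastCases ?_ ?_ j <;> [skip; intro j]) <;>
    simp only [Matrix.submatrix_apply, sEquiv_castSucc, sEquiv_last, fromBlocks_apply₁₁,
      fromBlocks_apply₁₂, fromBlocks_apply₂₁, fromBlocks_apply₂₂, Fx, Vm,
      Matrix.neg_apply, Matrix.one_apply, Matrix.zero_apply, transpose_apply]
  · -- i = last, j = last
    simp
  · -- i = last, j = castSucc
    have h1 : ¬ (Fin.last l = j.castSucc) := by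
      rw [Fin.ext_iff]; have := j.isLt; simp; omega
    have h2 : ¬ ((j.castSucc : ℕ) = (Fin.last l : ℕ) + 1) := by
      have := j.isLt; simp; omega
    rw [if_neg h1, if_neg h2]
  · -- i = castSucc, j = last
    have h1 : ¬ (i.castSucc = Fin.last l) := by
      rw [Fin.ext_iff]; have := i.isLt; simp; omega
    rw [if_neg h1]
    have h2 : ((Fin.last l : ℕ) = (i.castSucc : ℕ) + 1) ↔ ((i : ℕ) = l - 1) := by
      have := i.isLt; simp; omega
    by_cases hc : (i : ℕ) = l - 1
    · rw [if_pos (h2.mpr hc), if_pos hc]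
      have : t + (i.castSucc : ℕ) = t + l - 1 := by
        have := i.isLt; simp only [Fin.coe_castSucc]; omega
      rw [this]
    · rw [if_neg (fun h => hc (h2.mp h)), if_neg hc, neg_zero]
  · -- both castSucc
    have h1 : (i.castSucc = j.castSucc) ↔ (i = j) := by
      constructor <;> (intro h; rwa [Fin.ext_iff] at *; )
    have h2 : ((j.castSucc : ℕ) = (i.castSucc : ℕ) + 1) ↔ ((j : ℕ) = (i : ℕ) + 1) := by simp
    have h3 : (t + (i.castSucc : ℕ)) = t + (i : ℕ) := by simp
    by_cases hc : i = j
    · rw [if_pos (h1.mpr hc), if_pos hc]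
    · rw [if_neg (fun h => hc (h1.mp h)), if_neg hc]
      by_cases hd : (j : ℕ) = (i : ℕ) + 1
      · rw [if_pos (h2.mpr hd), if_pos hd, h3]
      · rw [if_neg (fun h => hd (h2.mp h)), if_neg hd]

lemma FuSucc : Fu B t (l + 1) =
    (fromBlocks (Fu B t l) 0 0 ((B (t + l))ᵀ)).submatrix (sEquiv l (Fin m)) (sEquiv l (Fin n)) := by
  ext ⟨i, p⟩ ⟨j, q⟩
  refine Fin.lastCases ?_ ?_ i <;> [skip; intro i] <;>
    (refine Fin.lastCases ?_ ?_ j <;> [skip; intro j]) <;>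
    simp only [Matrix.submatrix_apply, sEquiv_castSucc, sEquiv_last, fromBlocks_apply₁₁,
      fromBlocks_apply₁₂, fromBlocks_apply₂₁, fromBlocks_apply₂₂, Fu,
      Matrix.zero_apply, transpose_apply]
  · simp
  · have h1 : ¬ (Fin.last l = j.castSucc) := by
      rw [Fin.ext_iff]; have := j.isLt; simp; omega
    rw [if_neg h1]
  · have h1 : ¬ (i.castSucc = Fin.last l) := by
      rw [Fin.ext_iff]; have := i.isLt; simp; omega
    rw [if_neg h1]
  · have h1 : (i.castSucc = j.castSucc) ↔ (i = j) := by
      constructor <;> (intro h; rwa [Fin.ext_iff] at *; )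
    by_cases hc : i = j
    · rw [if_pos (h1.mpr hc), if_pos hc]; simp
    · rw [if_neg (fun h => hc (h1.mp h)), if_neg hc]

lemma PhixSucc : Phix G t (l + 1) =
    (fromRows (Phix G t l) ((G (t + l))ᵀ)).submatrix (sEquiv l (Fin n)) id := by
  ext ⟨i, p⟩ q
  refine Fin.lastCases ?_ ?_ i <;> [skip; intro i] <;>
    simp [Phix, sEquiv_castSucc, sEquiv_last, fromRows_apply_inl, fromRows_apply_inr]

lemma PhiuSucc : Phiu D t (l + 1) =
    (fromRows (Phiu D t l) ((D (t + l))ᵀ)).submatrix (sEquiv l (Fin m)) id := by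
  ext ⟨i, p⟩ q
  refine Fin.lastCases ?_ ?_ i <;> [skip; intro i] <;>
    simp [Phiu, sEquiv_castSucc, sEquiv_last, fromRows_apply_inl, fromRows_apply_inr]

lemma VmSucc : Vm A t (l + 1) =
    (fromRows (0 : Matrix (Fin l × Fin n) (Fin n) ℝ) ((A (t + l))ᵀ)).submatrix
      (sEquiv l (Fin n)) id := by
  ext ⟨i, p⟩ q
  refine Fin.lastCases ?_ ?_ i <;> [skip; intro i] <;>
    simp only [Vm, Matrix.submatrix_apply, sEquiv_castSucc, sEquiv_last, fromRows_apply_inl, fromRows_apply_inr,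
      Matrix.of_apply, Sum.elim_inl, Sum.elim_inr, Matrix.zero_apply, id_eq, transpose_apply]
  · rw [if_pos (by simp), show t + (l + 1) - 1 = t + l from by omega]
  · rw [if_neg (by have := i.isLt; simp; omega)]

lemma detFx (A : ℕ → Matrix (Fin n) (Fin n) ℝ) (t : ℕ) : ∀ l, (Fx A t l).det = 1
  | 0 => by
      haveI : IsEmpty (Fin 0 × Fin n) := ⟨fun x => x.1.elim0⟩
      exact Matrix.det_isEmpty
  | (l + 1) => by
      rw [FxSucc, Matrix.det_submatrix_equiv_self, Matrix.det_fromBlocks_zero₂₁,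
        detFx A t l, Matrix.det_one, one_mul]

lemma FxInvSucc : (Fx A t (l + 1))⁻¹ =
    (fromBlocks (Fx A t l)⁻¹ ((Fx A t l)⁻¹ * Vm A t l) 0 1).submatrix
      (sEquiv l (Fin n)) (sEquiv l (Fin n)) := by
  apply Matrix.inv_eq_right_inv
  rw [FxSucc, Matrix.submatrix_mul_equiv, fromBlocks_multiply]
  have hA : Fx A t l * (Fx A t l)⁻¹ = 1 :=
    Matrix.mul_nonsing_inv _ (by rw [detFx]; exact isUnit_one)
  have h2 : Fx A t l * ((Fx A t l)⁻¹ * Vm A t l) = Vm A t l := by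
    rw [← Matrix.mul_assoc, hA, Matrix.one_mul]
  rw [hA, h2]
  simp only [Matrix.mul_zero, Matrix.zero_mul, Matrix.mul_one, Matrix.one_mul, add_zero, zero_add,
    Matrix.neg_mul, neg_add_cancel, add_neg_cancel]
  rw [fromBlocks_one, Matrix.submatrix_one_equiv]

lemma submatrixAdd {α β γ δ : Type*} (P Q : Matrix α β ℝ) (f : γ → α) (g : δ → β) :
    P.submatrix f g + Q.submatrix f g = (P + Q).submatrix f g := rfl

lemma fromRowsAdd {α β γ : Type*} [Fintype α] (P P' : Matrix α γ ℝ) (Q Q' : Matrix β γ ℝ) :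
    fromRows P Q + fromRows P' Q' = fromRows (P + P') (Q + Q') := by
  ext (i | i) j <;> simp [fromRows_apply_inl, fromRows_apply_inr]

lemma H1Succ : H1m A B G D t (l + 1) =
    (fromRows (H1m A B G D t l + H2m A B t l * (G (t + l))ᵀ)
      ((B (t + l))ᵀ * (G (t + l))ᵀ + (D (t + l))ᵀ)).submatrix (sEquiv l (Fin m)) id := by
  rw [H1m, FuSucc, FxInvSucc, PhixSucc, PhiuSucc, Matrix.submatrix_mul_equiv,
    fromBlocks_multiply, Matrix.submatrix_mul_equiv, fromBlocks_mul_fromRows,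
    submatrixAdd, fromRowsAdd]
  have hcong : ∀ (X X' : Matrix (Fin l × Fin m) (Fin r) ℝ) (Y Y' : Matrix (Fin m) (Fin r) ℝ),
      X = X' → Y = Y' → (fromRows X Y).submatrix (sEquiv l (Fin m)) id
        = (fromRows X' Y').submatrix (sEquiv l (Fin m)) id := by
    rintro _ _ _ _ rfl rfl; rfl
  apply hcong
  · simp only [Matrix.mul_zero, Matrix.zero_mul, Matrix.mul_one, Matrix.one_mul, add_zero,
      zero_add, H1m, H2m, Matrix.mul_assoc]
    abel
  · simp only [Matrix.mul_zero, Matrix.zero_mul, Matrix.mul_one, Matrix.one_mul, add_zero,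
      zero_add]

lemma H2Succ : H2m A B t (l + 1) =
    (fromRows (H2m A B t l * (A (t + l))ᵀ)
      ((B (t + l))ᵀ * (A (t + l))ᵀ)).submatrix (sEquiv l (Fin m)) id := by
  rw [H2m, FuSucc, FxInvSucc, VmSucc, Matrix.submatrix_mul_equiv,
    fromBlocks_multiply, Matrix.submatrix_mul_equiv, fromBlocks_mul_fromRows]
  have hcong : ∀ (X X' : Matrix (Fin l × Fin m) (Fin n) ℝ) (Y Y' : Matrix (Fin m) (Fin n) ℝ),
      X = X' → Y = Y' → (fromRows X Y).submatrix (sEquiv l (Fin m)) id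
        = (fromRows X' Y').submatrix (sEquiv l (Fin m)) id := by
    rintro _ _ _ _ rfl rfl; rfl
  apply hcong
  · simp only [Matrix.mul_zero, Matrix.zero_mul, Matrix.mul_one, Matrix.one_mul, add_zero,
      zero_add, H2m, Matrix.mul_assoc]
  · simp only [Matrix.mul_zero, Matrix.zero_mul, Matrix.mul_one, Matrix.one_mul, add_zero,
      zero_add]

lemma HmSucc : Hm A B G D t (l + 1) =
    (fromBlocks (H1m A B G D t l + H2m A B t l * (G (t + l))ᵀ) (H2m A B t l * (A (t + l))ᵀ)
      ((B (t + l))ᵀ * (G (t + l))ᵀ + (D (t + l))ᵀ)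
      ((B (t + l))ᵀ * (A (t + l))ᵀ)).submatrix (sEquiv l (Fin m)) id := by
  rw [Hm, H1Succ, H2Succ, ← fromCols_fromRows_eq_fromBlocks]
  ext ip (q | q) <;> rfl

lemma rank_row_select_le {I₁ I₂ J : Type*} [Fintype I₂] [DecidableEq I₂] [Fintype J]
    (N : Matrix I₂ J ℝ) (g : I₁ → I₂) :
    (N.submatrix g id).rank ≤ N.rank := by
  have h : N.submatrix g id = ((1 : Matrix I₂ I₂ ℝ).submatrix g id) * N := by
    ext i j
    simp [Matrix.mul_apply, Matrix.one_apply, ite_mul, Finset.sum_ite_eq]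
  rw [h]
  exact Matrix.rank_mul_le_right _ _

lemma rank_le_card_sub_one {I J : Type*} [Fintype I] [Fintype J] [DecidableEq J]
    (M : Matrix I J ℝ) (v : J → ℝ) (hv : v ≠ 0) (h : M *ᵥ v = 0) :
    M.rank ≤ Fintype.card J - 1 := by
  have hrn := LinearMap.finrank_range_add_finrank_ker M.mulVecLin
  have hker : v ∈ LinearMap.ker M.mulVecLin := by
    rw [LinearMap.mem_ker, Matrix.mulVecLin_apply, h]
  have h0 : LinearMap.ker M.mulVecLin ≠ ⊥ := by
    intro hb
    exact hv (by simpa [hb] using hker)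
  have h1 : Module.finrank ℝ (LinearMap.ker M.mulVecLin) ≠ 0 := by
    rw [Ne, Submodule.finrank_eq_zero]
    exact h0
  have h2 : Module.finrank ℝ (J → ℝ) = Fintype.card J := Module.finrank_pi ℝ
  rw [Matrix.rank]
  omega

end AuxDev2
section AuxDev3

variable {A : ℕ → Matrix (Fin n) (Fin n) ℝ} {B : ℕ → Matrix (Fin n) (Fin m) ℝ}
  {G : ℕ → Matrix (Fin r) (Fin n) ℝ} {D : ℕ → Matrix (Fin r) (Fin m) ℝ} {t l : ℕ}

lemma Fx_mulVec_stack (lam : ℕ → Fin n → ℝ) (i : Fin l) (p : Fin n) :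
    (Fx A t l *ᵥ stackVec lam t l) (i, p) =
      lam (t + (i : ℕ)) p - (if (i : ℕ) + 1 < l then
        ∑ q, A (t + (i : ℕ)) q p * lam (t + (i : ℕ) + 1) q else 0) := by
  rw [Fx_mulVec_apply]
  by_cases h : (i : ℕ) + 1 < l
  · rw [dif_pos h, if_pos h]; rfl
  · rw [dif_neg h, if_neg h]; rfl

lemma Fu_mulVec_stack (lam : ℕ → Fin n → ℝ) (i : Fin l) (p : Fin m) :
    (Fu B t l *ᵥ stackVec lam t l) (i, p)
      = ∑ q, B (t + (i : ℕ)) q p * lam (t + (i : ℕ)) q := by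
  rw [Fu_mulVec_apply]; rfl

end AuxDev3
/-- Rank stabilization: under the full-horizon KKT conditions for some nonzero `ω`, if
`A_{t+l}` is invertible and `rank H(t,l) = r+n−1`, then `rank H(t,l+1) = r+n−1`. -/
theorem recovery_matrix_rank_stabilization (n m r T : ℕ) (hn : 0 < n) (hm : 0 < m) (hr : 0 < r) (hT : 1 ≤ T)
    (A : ℕ → Matrix (Fin n) (Fin n) ℝ) (B : ℕ → Matrix (Fin n) (Fin m) ℝ)
    (G : ℕ → Matrix (Fin r) (Fin n) ℝ) (D : ℕ → Matrix (Fin r) (Fin m) ℝ)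
    (hAT : A T = 1)
    (ω : Fin r → ℝ) (hω : ω ≠ 0)
    (lam : ℕ → Fin n → ℝ) (hKKT : KKT A B G D T ω lam)
    (t l : ℕ) (ht : 1 ≤ t) (hl : 1 ≤ l) (htl : t + l - 1 < T)
    (hdet : (A (t + l)).det ≠ 0)
    (hrank : (Hm A B G D t l).rank = r + n - 1) :
    (Hm A B G D t (l + 1)).rank = r + n - 1 := by
  classical
  obtain ⟨hK1, hK2⟩ := hKKT
  have hTl : t + l ≤ T := by omega
  -- pointwise versions of the KKT conditions
  have hK1' : ∀ ip : Fin T × Fin n,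
      (Fx A 1 T *ᵥ stackVec lam 1 T) ip = (Phix G 1 T *ᵥ ω) ip := by
    intro ip
    have h := congrFun hK1 ip
    simp only [Pi.add_apply, Pi.neg_apply, Pi.zero_apply] at h
    linarith
  have hK2' : ∀ ip : Fin T × Fin m,
      (Fu B 1 T *ᵥ stackVec lam 1 T) ip + (Phiu D 1 T *ᵥ ω) ip = 0 := by
    intro ip
    have h := congrFun hK2 ip
    simpa only [Pi.add_apply, Pi.zero_apply] using h
  -- the costate recurrence
  have hrec : ∀ k, 1 ≤ k → k ≤ T → ∀ p : Fin n,
      lam k p = (∑ q, G k q p * ω q)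
        + ∑ q, A k q p * (if k + 1 ≤ T then lam (k + 1) q else 0) := by
    intro k hk1 hkT p
    have hi : k - 1 < T := by omega
    have h := hK1' (⟨k - 1, hi⟩, p)
    rw [Fx_mulVec_stack, Phix_mulVec_apply] at h
    rw [show (((⟨k - 1, hi⟩ : Fin T) : ℕ)) = k - 1 from rfl] at h
    rw [show 1 + (k - 1) = k from by omega] at h
    by_cases hk : k + 1 ≤ T
    · rw [if_pos (show k - 1 + 1 < T from by omega)] at h
      simp only [if_pos hk]
      linarith
    · rw [if_neg (show ¬ (k - 1 + 1 < T) from by omega)] at h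
      simp only [if_neg hk, mul_zero, Finset.sum_const_zero, add_zero]
      linarith
  -- the stationarity condition on each window element
  have hrecB : ∀ k, 1 ≤ k → k ≤ T → ∀ p : Fin m,
      (∑ q, B k q p * lam k q) + (∑ q, D k q p * ω q) = 0 := by
    intro k hk1 hkT p
    have hi : k - 1 < T := by omega
    have h := hK2' (⟨k - 1, hi⟩, p)
    rw [Fu_mulVec_stack, Phiu_mulVec_apply] at h
    rw [show (((⟨k - 1, hi⟩ : Fin T) : ℕ)) = k - 1 from rfl] at h
    rw [show 1 + (k - 1) = k from by omega] at h
    exact h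
  -- the kernel vector
  set w : Fin n → ℝ := fun q => if t + l + 1 ≤ T then lam (t + l + 1) q else 0 with hw
  have hstack : Fx A t (l + 1) *ᵥ stackVec lam t (l + 1)
      = Phix G t (l + 1) *ᵥ ω + Vm A t (l + 1) *ᵥ w := by
    funext ip
    obtain ⟨i, p⟩ := ip
    rw [Fx_mulVec_stack, Pi.add_apply, Phix_mulVec_apply, Vm_mulVec_apply]
    have hiv := i.isLt
    by_cases hil : (i : ℕ) < l
    · rw [if_pos (show (i : ℕ) + 1 < l + 1 from by omega),
        if_neg (show ¬ ((i : ℕ) = l + 1 - 1) from by omega), add_zero]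
      have h := hrec (t + (i : ℕ)) (by omega) (by omega) p
      simp only [if_pos (show t + (i : ℕ) + 1 ≤ T from by omega)] at h
      linarith
    · have hil' : (i : ℕ) = l := by omega
      rw [if_neg (show ¬ ((i : ℕ) + 1 < l + 1) from by omega),
        if_pos (show (i : ℕ) = l + 1 - 1 from by omega), sub_zero,
        show t + (l + 1) - 1 = t + l from rfl, hil']
      have h := hrec (t + l) (by omega) (by omega) p
      simp only [hw]
      exact h
  have hdet1 : IsUnit (Fx A t (l + 1)).det := by rw [detFx]; exact isUnit_one
  have hker : Hm A B G D t (l + 1) *ᵥ Sum.elim ω w = 0 := by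
    rw [Hm, fromCols_mulVec_sumElim, H1m, H2m, Matrix.add_mulVec]
    have key : (Fu B t (l + 1) * (Fx A t (l + 1))⁻¹ * Phix G t (l + 1)) *ᵥ ω
        + (Fu B t (l + 1) * (Fx A t (l + 1))⁻¹ * Vm A t (l + 1)) *ᵥ w
        = Fu B t (l + 1) *ᵥ stackVec lam t (l + 1) := by
      rw [← Matrix.mulVec_mulVec, ← Matrix.mulVec_mulVec, ← Matrix.mulVec_mulVec,
        ← Matrix.mulVec_mulVec, ← Matrix.mulVec_add, ← Matrix.mulVec_add, ← hstack,
        Matrix.mulVec_mulVec, Matrix.mulVec_mulVec, Matrix.mul_assoc,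
        Matrix.nonsing_inv_mul _ hdet1, Matrix.mul_one]
    rw [add_right_comm, key]
    funext ip
    obtain ⟨i, p⟩ := ip
    rw [Pi.add_apply, Fu_mulVec_stack, Phiu_mulVec_apply, Pi.zero_apply]
    exact hrecB (t + (i : ℕ)) (by omega) (by have := i.isLt; omega) p
  have hvne : Sum.elim ω w ≠ 0 := by
    obtain ⟨q, hq⟩ := Function.ne_iff.mp hω
    intro hz
    exact hq (by simpa using congrFun hz (Sum.inl q))
  have hub : (Hm A B G D t (l + 1)).rank ≤ r + n - 1 := by
    have h := rank_le_card_sub_one _ _ hvne hker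
    simpa using h
  -- lower bound
  set M : Matrix (Fin r ⊕ Fin n) (Fin r ⊕ Fin n) ℝ :=
    fromBlocks (1 : Matrix (Fin r) (Fin r) ℝ) 0 ((G (t + l))ᵀ) ((A (t + l))ᵀ) with hM
  have hMdet : IsUnit M.det := by
    rw [hM, Matrix.det_fromBlocks_zero₁₂, Matrix.det_one, one_mul, Matrix.det_transpose]
    exact isUnit_iff_ne_zero.mpr hdet
  have htop : Hm A B G D t l * M
      = (Hm A B G D t (l + 1)).submatrix
          (fun ip : Fin l × Fin m => (ip.1.castSucc, ip.2)) id := by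
    rw [HmSucc, Matrix.submatrix_submatrix]
    have hcomp : (⇑(sEquiv l (Fin m)) ∘ fun ip : Fin l × Fin m => (ip.1.castSucc, ip.2))
        = Sum.inl := by
      funext ip
      exact sEquiv_castSucc l ip.1 ip.2
    rw [hcomp, hM, Hm, fromCols_mul_fromBlocks, Matrix.mul_one, Matrix.mul_zero, zero_add]
    ext ip q
    cases q <;> rfl
  have hge : r + n - 1 ≤ (Hm A B G D t (l + 1)).rank := by
    have h1 : (Hm A B G D t l * M).rank = (Hm A B G D t l).rank :=
      Matrix.rank_mul_eq_left_of_isUnit_det M (Hm A B G D t l) hMdet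
    have h2 : (Hm A B G D t l * M).rank ≤ (Hm A B G D t (l + 1)).rank := by
      rw [htop]
      exact rank_row_select_le _ _
    omega
  omega

end
end
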